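/- Let B be a finite Blaschke product of degree n and M ≠ id a Möbius transformation of the unit disc with B ∘ M = B, and let k ≥ 2 be the order of M (i.e., M^k = id and M^j ≠ id for 1 ≤ j < k). Then k divides n. -/

import Mathlib

open Complex

private lemma one_sub_ne {u v : ℂ} (h : ‖u‖ * ‖v‖ < 1) :
    1 - u * v ≠ 0 := by
  intro h0
  have : u * v = 1 := by linear_combination -h0
  rw [← norm_mul] at h
  rw [this] at h
  simp at h

private lemma normSq_identity (α z : ℂ) :
    normSq (1 - (starRingEnd ℂ) α * z) - normSq (z - α)
      = (1 - normSq α) * (1 - normSq z) := by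
  have key : (1 - (starRingEnd ℂ) α * z) * (starRingEnd ℂ) (1 - (starRingEnd ℂ) α * z)
      - (z - α) * (starRingEnd ℂ) (z - α)
      = (1 - α * (starRingEnd ℂ) α) * (1 - z * (starRingEnd ℂ) z) := by
    simp only [map_sub, map_mul, map_one, Complex.conj_conj]
    ring
  rw [mul_conj, mul_conj, mul_conj, mul_conj] at key
  exact_mod_cast key

private lemma abs_lt_abs_of_normSq {x y : ℂ} (h : normSq x < normSq y) :
    ‖x‖ < ‖y‖ := by
  rw [Complex.norm_def, Complex.norm_def]
  exact Real.sqrt_lt_sqrt (normSq_nonneg x) h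

private lemma mball {e α : ℂ} (he : ‖e‖ = 1) (hα : ‖α‖ < 1)
    {z : ℂ} (hz : ‖z‖ < 1) :
    ‖e * (z - α) / (1 - (starRingEnd ℂ) α * z)‖ < 1 := by
  have hαn : normSq α < 1 := by rw [← Complex.sq_norm]; nlinarith [norm_nonneg α]
  have hzn : normSq z < 1 := by rw [← Complex.sq_norm]; nlinarith [norm_nonneg z]
  have hden : (1 : ℂ) - (starRingEnd ℂ) α * z ≠ 0 := by
    apply one_sub_ne
    rw [Complex.norm_conj]
    nlinarith [norm_nonneg α, norm_nonneg z]
  have hlt : normSq (e * (z - α)) < normSq (1 - (starRingEnd ℂ) α * z) := by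
    rw [normSq_mul]
    have : normSq e = 1 := by rw [← Complex.sq_norm, he]; norm_num
    rw [this, one_mul]
    nlinarith [normSq_identity α z]
  have hpos : 0 < ‖1 - (starRingEnd ℂ) α * z‖ :=
    norm_pos_iff.mpr hden
  rw [norm_div, div_lt_one hpos]
  exact abs_lt_abs_of_normSq hlt

section
variable {e α : ℂ} {M : ℂ → ℂ}

private lemma iter_ball (he : ‖e‖ = 1) (hα : ‖α‖ < 1)
    (hM : ∀ z, M z = e * (z - α) / (1 - (starRingEnd ℂ) α * z))
    (j : ℕ) {z : ℂ} (hz : ‖z‖ < 1) : ‖M^[j] z‖ < 1 := by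
  induction j with
  | zero => simpa using hz
  | succ j ih =>
    rw [Function.iterate_succ_apply', hM]
    exact mball he hα ih

private lemma rep_exists (he : ‖e‖ = 1) (hα : ‖α‖ < 1)
    (hM : ∀ z, M z = e * (z - α) / (1 - (starRingEnd ℂ) α * z)) (j : ℕ) :
    ∃ a b c d : ℂ,
      (∀ z : ℂ, ‖z‖ < 1 →
        c * z + d ≠ 0 ∧ M^[j] z = (a * z + b) / (c * z + d)) ∧
      ((starRingEnd ℂ) a * b = (starRingEnd ℂ) c * d) ∧
      ((starRingEnd ℂ) a * a - (starRingEnd ℂ) c * c = ((1:ℂ) - (starRingEnd ℂ) α * α) ^ j) ∧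
      ((starRingEnd ℂ) d * d - (starRingEnd ℂ) b * b = ((1:ℂ) - (starRingEnd ℂ) α * α) ^ j) ∧
      (∀ w t : ℂ, e * w - e * α = t * w → -(starRingEnd ℂ) α * w + 1 = t →
        a * w + b = t ^ j * w ∧ c * w + d = t ^ j) ∧
      (∀ t : ℂ,
        (e - t) * (e - t) + (-(e * α)) * (-((starRingEnd ℂ) α)) = 0 →
        (e - t) * (-(e * α)) + (-(e * α)) * (1 - t) = 0 →
        (-((starRingEnd ℂ) α)) * (e - t) + (1 - t) * (-((starRingEnd ℂ) α)) = 0 →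
        (-((starRingEnd ℂ) α)) * (-(e * α)) + (1 - t) * (1 - t) = 0 →
        a * t = t ^ (j+1) + (j:ℂ) * t ^ j * (e - t) ∧
        b * t = (j:ℂ) * t ^ j * (-(e * α)) ∧
        c * t = (j:ℂ) * t ^ j * (-((starRingEnd ℂ) α)) ∧
        d * t = t ^ (j+1) + (j:ℂ) * t ^ j * (1 - t)) := by
  induction j with
  | zero =>
    refine ⟨1, 0, 0, 1, ?_, by simp, by simp, by simp, ?_, ?_⟩
    · intro z _; simp
    · intro w t _ _; simp
    · intro t _ _ _ _; simp
  | succ j ih =>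
    obtain ⟨a, b, c, d, hrep, hJ1, hJ2, hJ3, heig, hpar⟩ := ih
    have he' : (starRingEnd ℂ) e * e = 1 := by
      have h0 := Complex.mul_conj e
      rw [← Complex.sq_norm, he] at h0
      rw [mul_comm] at h0; simpa using h0
    refine ⟨e * a - e * α * c, e * b - e * α * d,
      -((starRingEnd ℂ) α) * a + c, -((starRingEnd ℂ) α) * b + d, ?_, ?_, ?_, ?_, ?_, ?_⟩
    · intro z hz
      obtain ⟨hden, hval⟩ := hrep z hz
      have hw : ‖(a * z + b) / (c * z + d)‖ < 1 := by
        rw [← hval]; exact iter_ball he hα hM j hz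
      have h1w : (1 : ℂ) - (starRingEnd ℂ) α * ((a * z + b) / (c * z + d)) ≠ 0 := by
        apply one_sub_ne
        rw [Complex.norm_conj]
        nlinarith [norm_nonneg α, norm_nonneg ((a * z + b) / (c * z + d))]
      have hnd : (-((starRingEnd ℂ) α) * a + c) * z + (-((starRingEnd ℂ) α) * b + d)
          = (c * z + d) * (1 - (starRingEnd ℂ) α * ((a * z + b) / (c * z + d))) := by
        field_simp
        ring
      constructor
      · rw [hnd]; exact mul_ne_zero hden h1w
      · rw [Function.iterate_succ_apply', hval, hM, hnd]
        rw [div_eq_div_iff h1w (mul_ne_zero hden h1w)]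
        have hden' : z * c + d ≠ 0 := by rw [mul_comm]; exact hden
        field_simp
        ring
    · simp only [map_sub, map_mul, map_add, map_neg, Complex.conj_conj]
      linear_combination ((starRingEnd ℂ) a * b - α * ((starRingEnd ℂ) a) * d
          - (starRingEnd ℂ) α * ((starRingEnd ℂ) c) * b
          + (starRingEnd ℂ) α * α * ((starRingEnd ℂ) c) * d) * he'
        + (1 - α * (starRingEnd ℂ) α) * hJ1
    · simp only [map_sub, map_mul, map_add, map_neg, Complex.conj_conj]
      linear_combination ((starRingEnd ℂ) a * a - α * ((starRingEnd ℂ) a) * c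
          - (starRingEnd ℂ) α * ((starRingEnd ℂ) c) * a
          + (starRingEnd ℂ) α * α * ((starRingEnd ℂ) c) * c) * he'
        + (1 - (starRingEnd ℂ) α * α) * hJ2
    · simp only [map_sub, map_mul, map_add, map_neg, Complex.conj_conj]
      linear_combination (-((starRingEnd ℂ) b * b - α * ((starRingEnd ℂ) b) * d
          - (starRingEnd ℂ) α * ((starRingEnd ℂ) d) * b
          + (starRingEnd ℂ) α * α * ((starRingEnd ℂ) d) * d)) * he'
        + (1 - (starRingEnd ℂ) α * α) * hJ3
    · intro w t hw1 hw2
      obtain ⟨h1, h2⟩ := heig w t hw1 hw2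
      constructor
      · linear_combination e * h1 - e * α * h2 + t ^ j * hw1
      · linear_combination (-((starRingEnd ℂ) α)) * h1 + h2 + t ^ j * hw2
    · intro t p11 p12 p21 p22
      obtain ⟨q1, q2, q3, q4⟩ := hpar t p11 p12 p21 p22
      push_cast
      refine ⟨?_, ?_, ?_, ?_⟩
      · linear_combination e * q1 - e * α * q3 + (j:ℂ) * t ^ j * p11
      · linear_combination e * q2 - e * α * q4 + (j:ℂ) * t ^ j * p12
      · linear_combination (-((starRingEnd ℂ) α)) * q1 + q3 + (j:ℂ) * t ^ j * p21
      · linear_combination (-((starRingEnd ℂ) α)) * q2 + q4 + (j:ℂ) * t ^ j * p22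
end

private lemma dvd_of_root {k m : ℕ} {ω : ℂ} (hk0 : 0 < k) (hk1 : ω ^ k = 1)
    (hj : ∀ j, 0 < j → j < k → ω ^ j ≠ 1) (hm : ω ^ m = 1) : k ∣ m := by
  have hr : ω ^ (m % k) = 1 := by
    rw [← Nat.div_add_mod m k, pow_add, pow_mul, hk1, one_pow, one_mul] at hm
    exact hm
  rcases Nat.eq_zero_or_pos (m % k) with h0 | hpos
  · exact Nat.dvd_of_mod_eq_zero h0
  · exact absurd hr (hj _ hpos (Nat.mod_lt m hk0))

private lemma pow_eq_one_real {x : ℝ} {k : ℕ} (hx : 0 < x) (hk : 0 < k)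
    (h : x ^ k = 1) : x = 1 := by
  rcases lt_trichotomy x 1 with h1 | h1 | h1
  · have := pow_lt_one₀ (le_of_lt hx) h1 hk.ne'
    linarith
  · exact h1
  · have := one_lt_pow₀ h1 hk.ne'
    linarith

set_option maxHeartbeats 2000000 in
private lemma keyFixed {e α : ℂ} {M : ℂ → ℂ} {k : ℕ} (he : ‖e‖ = 1)
    (hα : ‖α‖ < 1)
    (hM : ∀ z, M z = e * (z - α) / (1 - (starRingEnd ℂ) α * z))
    (hne : ∃ z, ‖z‖ < 1 ∧ M z ≠ z)
    (hord : ∀ z, ‖z‖ < 1 → M^[k] z = z)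
    (hmin : ∀ j, 0 < j → j < k → ∃ z, ‖z‖ < 1 ∧ M^[j] z ≠ z)
    (hk : 2 ≤ k) :
    ∃ p : ℂ, ‖p‖ < 1 ∧ M p = p ∧
      (∀ j, 0 < j → j < k → ∀ z, ‖z‖ < 1 → z ≠ p → M^[j] z ≠ z) ∧
      (∀ m : ℕ, ((e + p * (starRingEnd ℂ) α) / (1 - (starRingEnd ℂ) α * p)) ^ m = 1
        → k ∣ m) := by
  have hk0 : 0 < k := by omega
  by_cases hα0 : α = 0
  · subst hα0
    have hMz : ∀ z, M z = e * z := by intro z; rw [hM]; simp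
    have hMj : ∀ j z, M^[j] z = e ^ j * z := by
      intro j
      induction j with
      | zero => intro z; simp
      | succ j ih => intro z; rw [Function.iterate_succ_apply', ih, hMz]; ring
    have hej : ∀ j, 0 < j → j < k → e ^ j ≠ 1 := by
      intro j hj1 hj2 hej
      obtain ⟨z, hz, hne'⟩ := hmin j hj1 hj2
      exact hne' (by rw [hMj, hej, one_mul])
    have hek : e ^ k = 1 := by
      have h2 := hord (1/2) (by norm_num)
      rw [hMj] at h2
      have : ((1:ℂ)/2) ≠ 0 := by norm_num
      field_simp at h2
      exact h2
    refine ⟨0, by simp, by rw [hMz]; ring, ?_, ?_⟩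
    · intro j hj1 hj2 z hz hz0 hfix
      rw [hMj] at hfix
      have : e ^ j = 1 := by
        have h0 : (e ^ j - 1) * z = 0 := by linear_combination hfix
        rcases mul_eq_zero.mp h0 with h | h
        · linear_combination h
        · exact absurd h hz0
      exact hej j hj1 hj2 this
    · intro m hm
      simp only [map_zero, mul_zero, add_zero, zero_mul, sub_zero, div_one] at hm
      exact dvd_of_root hk0 hek hej hm
  · -- α ≠ 0
    have hcα : (starRingEnd ℂ) α ≠ 0 := by
      intro h; exact hα0 (by simpa using congrArg (starRingEnd ℂ) h)
    have he0 : e ≠ 0 := by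
      intro h; rw [h] at he; simp at he
    have he' : (starRingEnd ℂ) e * e = 1 := by
      have h0 := Complex.mul_conj e
      rw [← Complex.sq_norm, he] at h0
      rw [mul_comm] at h0; simpa using h0
    have hnsα : normSq α < 1 := by
      rw [← Complex.sq_norm]; nlinarith [norm_nonneg α]
    have hrpos : (0:ℝ) < 1 - normSq α := by linarith
    have hRr : (1:ℂ) - (starRingEnd ℂ) α * α = ((1 - normSq α : ℝ) : ℂ) := by
      have : (starRingEnd ℂ) α * α = (normSq α : ℂ) := by rw [mul_comm, Complex.mul_conj]
      rw [this]; push_cast; ring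
    have hR0 : (1:ℂ) - (starRingEnd ℂ) α * α ≠ 0 := by
      rw [hRr]; exact_mod_cast hrpos.ne'
    have hRj : ∀ j : ℕ, ((1:ℂ) - (starRingEnd ℂ) α * α) ^ j ≠ 0 := fun j => pow_ne_zero j hR0
    -- scalar form at k
    obtain ⟨a0, b0, c0, d0, hrepk, hJ1k, hJ2k, hJ3k, heigk, hpark⟩ := rep_exists he hα hM k
    have hhalf : ‖(1:ℂ)/2‖ < 1 := by
      rw [norm_div, norm_one, Complex.norm_two]; norm_num
    have hnhalf : ‖-(1:ℂ)/2‖ < 1 := by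
      rw [neg_div, norm_neg]
      exact hhalf
    have hb0 : b0 = 0 := by
      obtain ⟨hden, hval⟩ := hrepk 0 (by simp)
      rw [hord 0 (by simp)] at hval
      simp only [mul_zero, zero_add] at hval hden
      field_simp at hval
      linear_combination -hval
    have hc0 : c0 = 0 ∧ a0 = d0 := by
      obtain ⟨hden1, hval1⟩ := hrepk ((1:ℂ)/2) hhalf
      obtain ⟨hden2, hval2⟩ := hrepk (-(1:ℂ)/2) hnhalf
      rw [hord _ hhalf] at hval1
      rw [hord _ hnhalf] at hval2
      rw [eq_div_iff hden1] at hval1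
      rw [eq_div_iff hden2] at hval2
      constructor
      · linear_combination 2*hval1 + 2*hval2 + 4*hb0
      · linear_combination hval2 - hval1
    obtain ⟨hc0', had0⟩ := hc0
    subst hb0
    have ha0 : a0 ≠ 0 := by
      intro h
      apply hRj k
      rw [← hJ2k, h, hc0']
      simp
    -- case on discriminant
    by_cases hdisc : (e-1)^2 + 4*e*α*((starRingEnd ℂ) α) = 0
    · -- parabolic : contradiction
      exfalso
      set t : ℂ := (e+1)/2 with ht
      have ht2 : t^2 = e * (1 - (starRingEnd ℂ) α * α) := by
        rw [ht]; linear_combination (1/4) * hdisc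
      have ht0 : t ≠ 0 := by
        intro h
        rw [h] at ht2
        have h00 : (0:ℂ)^2 = 0 := by norm_num
        rw [h00] at ht2
        exact mul_ne_zero he0 hR0 ht2.symm
      obtain ⟨q1, q2, q3, q4⟩ := hpark t
        (by rw [ht]; linear_combination (1/4)*hdisc)
        (by rw [ht]; ring)
        (by rw [ht]; ring)
        (by rw [ht]; linear_combination (1/4)*hdisc)
      rw [hc0'] at q3
      have hk' : ((k:ℂ)) ≠ 0 := Nat.cast_ne_zero.mpr (by omega)
      have : (k:ℂ) * t^k * (-(starRingEnd ℂ) α) ≠ 0 :=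
        mul_ne_zero (mul_ne_zero hk' (pow_ne_zero k ht0)) (neg_ne_zero.mpr hcα)
      exact this (by linear_combination -q3)
    · -- two distinct fixed points
      obtain ⟨δ, hδ⟩ := IsAlgClosed.exists_pow_nat_eq ((e-1)^2 + 4*e*α*((starRingEnd ℂ) α)) (n := 2) (by norm_num)
      have hδ0 : δ ≠ 0 := by
        intro h; rw [h] at hδ; exact hdisc (by linear_combination -hδ)
      set w₁ : ℂ := (1 - e + δ)/2 with hw₁
      set w₂ : ℂ := (1 - e - δ)/2 with hw₂
      set z₁ : ℂ := w₁ / (starRingEnd ℂ) α with hz₁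
      set z₂ : ℂ := w₂ / (starRingEnd ℂ) α with hz₂
      set t₁ : ℂ := 1 - w₁ with ht₁
      set t₂ : ℂ := 1 - w₂ with ht₂
      have hαz₁ : (starRingEnd ℂ) α * z₁ = w₁ := by
        rw [hz₁]; field_simp
      have hαz₂ : (starRingEnd ℂ) α * z₂ = w₂ := by
        rw [hz₂]; field_simp
      have ft₁ : -(starRingEnd ℂ) α * z₁ + 1 = t₁ := by
        rw [ht₁]; linear_combination -hαz₁
      have ft₂ : -(starRingEnd ℂ) α * z₂ + 1 = t₂ := by
        rw [ht₂]; linear_combination -hαz₂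
      have key1 : (starRingEnd ℂ) α * z₁^2 + (e-1)*z₁ - e*α = 0 := by
        have h4 : ((starRingEnd ℂ) α) * ((starRingEnd ℂ) α * z₁^2 + (e-1)*z₁ - e*α) = 0 := by
          have hs : ((starRingEnd ℂ) α * z₁) * ((starRingEnd ℂ) α * z₁) = w₁ * w₁ := by
            rw [hαz₁]
          have hα1' := hαz₁
          rw [hw₁] at hs hα1'
          linear_combination hs + (e-1) * hα1' + (1/4)*hδ
        rcases mul_eq_zero.mp h4 with h | h
        · exact absurd h hcα
        · exact h
      have key2 : (starRingEnd ℂ) α * z₂^2 + (e-1)*z₂ - e*α = 0 := by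
        have h4 : ((starRingEnd ℂ) α) * ((starRingEnd ℂ) α * z₂^2 + (e-1)*z₂ - e*α) = 0 := by
          have hs : ((starRingEnd ℂ) α * z₂) * ((starRingEnd ℂ) α * z₂) = w₂ * w₂ := by
            rw [hαz₂]
          have hα2' := hαz₂
          rw [hw₂] at hs hα2'
          linear_combination hs + (e-1) * hα2' + (1/4)*hδ
        rcases mul_eq_zero.mp h4 with h | h
        · exact absurd h hcα
        · exact h
      have fe₁ : e * z₁ - e * α = t₁ * z₁ := by
        rw [← ft₁]; linear_combination key1
      have fe₂ : e * z₂ - e * α = t₂ * z₂ := by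
        rw [← ft₂]; linear_combination key2
      have htt : t₁ * t₂ = e * (1 - (starRingEnd ℂ) α * α) := by
        rw [ht₁, ht₂, hw₁, hw₂]; linear_combination (-1/4) * hδ
      have ht10 : t₁ ≠ 0 := by
        intro h; rw [h, zero_mul] at htt
        exact mul_ne_zero he0 hR0 htt.symm
      have ht20 : t₂ ≠ 0 := by
        intro h; rw [h, mul_zero] at htt
        exact mul_ne_zero he0 hR0 htt.symm
      have tk₁ : t₁ ^ k = a0 := by
        obtain ⟨_, h2⟩ := heigk z₁ t₁ fe₁ ft₁
        rw [hc0'] at h2; rw [← h2, ← had0]; ring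
      have tk₂ : t₂ ^ k = a0 := by
        obtain ⟨_, h2⟩ := heigk z₂ t₂ fe₂ ft₂
        rw [hc0'] at h2; rw [← h2, ← had0]; ring
      have hz12 : z₁ ≠ z₂ := by
        intro h
        have : w₁ = w₂ := by rw [← hαz₁, ← hαz₂, h]
        rw [hw₁, hw₂] at this
        exact hδ0 (by linear_combination this)
      have hsum₁ : e + z₁ * (starRingEnd ℂ) α = t₂ := by
        rw [mul_comm, hαz₁, ht₂, hw₁, hw₂]; ring
      have hsum₂ : e + z₂ * (starRingEnd ℂ) α = t₁ := by
        rw [mul_comm, hαz₂, ht₁, hw₁, hw₂]; ring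
      
      -- product of roots has modulus 1
      have hzzc : z₁ * z₂ * ((starRingEnd ℂ) α) = -(e*α) := by
        have hprod : ((starRingEnd ℂ) α * z₁) * ((starRingEnd ℂ) α * z₂) = w₁ * w₂ := by
          rw [hαz₁, hαz₂]
        rw [hw₁, hw₂] at hprod
        have h0 : (starRingEnd ℂ) α * (z₁ * z₂ * ((starRingEnd ℂ) α) + e*α) = 0 := by
          linear_combination hprod - (1/4)*hδ
        rcases mul_eq_zero.mp h0 with h | h
        · exact absurd h hcα
        · linear_combination h
      have habs1 : ‖z₁‖ * ‖z₂‖ = 1 := by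
        have := congrArg (‖·‖) hzzc
        simp only [norm_mul, norm_neg, Complex.norm_conj] at this
        rw [he] at this
        have hαpos : 0 < ‖α‖ := norm_pos_iff.mpr hα0
        rw [one_mul] at this
        field_simp at this ⊢
        nlinarith [this]
      have hone : ‖z₁‖ < 1 ∨ ‖z₂‖ < 1 := by
        by_contra hcon
        push_neg at hcon
        obtain ⟨h1, h2⟩ := hcon
        have e1 : ‖z₁‖ = 1 := by nlinarith
        have e2 : ‖z₂‖ = 1 := by nlinarith
        have ns1 : ((starRingEnd ℂ) z₁) * z₁ = 1 := by
          rw [mul_comm, Complex.mul_conj]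
          rw [← Complex.sq_norm, e1]; norm_num
        have l1 := congrArg (starRingEnd ℂ) fe₁
        simp only [map_sub, map_mul] at l1
        have l2 := congrArg (starRingEnd ℂ) ft₁
        simp only [map_add, map_mul, map_neg, map_one, Complex.conj_conj] at l2
        have hpair : (starRingEnd ℂ) t₁ * t₂ * ((starRingEnd ℂ) z₁ * z₂ - 1)
            = (1 - (starRingEnd ℂ) α * α) * ((starRingEnd ℂ) z₁ * z₂ - 1) := by
          have hstep : (starRingEnd ℂ) t₁ * t₂ * ((starRingEnd ℂ) z₁ * z₂ - 1)
              = ((starRingEnd ℂ) t₁ * (starRingEnd ℂ) z₁) * (t₂ * z₂)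
                - (starRingEnd ℂ) t₁ * t₂ := by ring
          rw [hstep, ← l1, ← l2, ← fe₂, ← ft₂]
          linear_combination (((starRingEnd ℂ) z₁ - (starRingEnd ℂ) α) * (z₂ - α)) * he'
        have hne1 : (starRingEnd ℂ) z₁ * z₂ - 1 ≠ 0 := by
          intro h
          apply hz12
          have hz1c : (starRingEnd ℂ) z₁ ≠ 0 := by
            intro h0; rw [h0, zero_mul] at ns1; simp at ns1
          have h0 : (starRingEnd ℂ) z₁ * (z₁ - z₂) = 0 := by
            linear_combination ns1 - h
          rcases mul_eq_zero.mp h0 with h' | h'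
          · exact absurd h' hz1c
          · linear_combination h'
        have htT : (starRingEnd ℂ) t₁ * t₂ = 1 - (starRingEnd ℂ) α * α :=
          mul_right_cancel₀ hne1 hpair
        have hu : ((normSq t₁ : ℝ) : ℂ) = (starRingEnd ℂ) t₁ * t₁ := by
          rw [mul_comm, Complex.mul_conj]
        have hts : t₂ * ((normSq t₁ : ℝ) : ℂ) = (1 - (starRingEnd ℂ) α * α) * t₁ := by
          rw [hu]; linear_combination t₁ * htT
        have hupos : 0 < normSq t₁ := normSq_pos.mpr ht10
        set ρ : ℝ := (1 - normSq α) / normSq t₁ with hρdef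
        have hρpos : 0 < ρ := div_pos hrpos hupos
        have hNS0 : ((normSq t₁:ℝ):ℂ) ≠ 0 := Complex.ofReal_ne_zero.mpr hupos.ne'
        have ht21 : t₂ = ((ρ:ℝ):ℂ) * t₁ := by
          rw [hRr] at hts
          push_cast at hts
          rw [hρdef]
          push_cast
          rw [div_mul_eq_mul_div, eq_div_iff hNS0]
          linear_combination hts
        have hρk : ((ρ:ℝ):ℂ)^k = 1 := by
          have hh : (((ρ:ℝ):ℂ) * t₁)^k = t₁^k := by rw [← ht21, tk₂, tk₁]
          rw [mul_pow] at hh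
          have := mul_right_cancel₀ (pow_ne_zero k ht10) (hh.trans (one_mul (t₁^k)).symm)
          exact this
        have hρk' : ρ ^ k = 1 := by exact_mod_cast hρk
        have hρ1 : ρ = 1 := pow_eq_one_real hρpos hk0 hρk'
        rw [hρ1] at ht21
        push_cast at ht21
        rw [one_mul] at ht21
        apply hδ0
        rw [ht₂, ht₁, hw₁, hw₂] at ht21
        linear_combination ht21
      -- the main construction, symmetric in the two roots
      have main : ∀ p q tp tq : ℂ, ‖p‖ < 1 → p ≠ q →
          (e * p - e * α = tp * p) → (-(starRingEnd ℂ) α * p + 1 = tp) →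
          (e * q - e * α = tq * q) → (-(starRingEnd ℂ) α * q + 1 = tq) →
          tp ^ k = a0 → tq ^ k = a0 → (e + p * (starRingEnd ℂ) α = tq) →
          ∃ p : ℂ, ‖p‖ < 1 ∧ M p = p ∧
            (∀ j, 0 < j → j < k → ∀ z, ‖z‖ < 1 → z ≠ p → M^[j] z ≠ z) ∧
            (∀ m : ℕ, ((e + p * (starRingEnd ℂ) α) / (1 - (starRingEnd ℂ) α * p)) ^ m = 1
              → k ∣ m) := by
        intro p q tp tq hp hpq fep ftp feq ftq tpk tqk hsump
        have htp0 : tp ≠ 0 := by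
          intro h; rw [h, zero_pow (by omega : k ≠ 0)] at tpk; exact ha0 tpk.symm
        have hMp : M p = p := by
          rw [hM]
          have hden : 1 - (starRingEnd ℂ) α * p = tp := by linear_combination ftp
          rw [hden, div_eq_iff htp0]
          linear_combination fep
        have hid : ∀ j, 0 < j → j < k → ¬(∀ w, ‖w‖ < 1 → M^[j] w = w) := by
          intro j h1 h2 hall
          obtain ⟨z0, hz0, hz0'⟩ := hmin j h1 h2
          exact hz0' (hall z0 hz0)
        have F2 : ∀ j, 0 < j → j < k → ∀ z, ‖z‖ < 1 → z ≠ p → M^[j] z ≠ z := by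
          intro j hj1 hj2 z hz hzp hfix
          obtain ⟨a, b, c, d, hrepj, hJ1, hJ2, hJ3, heigj, _⟩ := rep_exists he hα hM j
          obtain ⟨hden, hval⟩ := hrepj z hz
          rw [hfix, eq_div_iff hden] at hval
          obtain ⟨hpe1, hpe2⟩ := heigj p tp fep ftp
          have hQp : p*(c*p+d) = a*p + b := by rw [hpe1, hpe2]; ring
          by_cases hcc : c = 0
          · have haa : a ≠ 0 := by
              intro h; apply hRj j; rw [← hJ2, h, hcc]; simp
            have hbb : b = 0 := by
              have h1 : (starRingEnd ℂ) a * b = 0 := by rw [hJ1, hcc]; simp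
              rcases mul_eq_zero.mp h1 with h | h
              · exact absurd (by simpa using congrArg (starRingEnd ℂ) h) haa
              · exact h
            by_cases hda : d = a
            · apply hid j hj1 hj2
              intro w hw
              obtain ⟨hdw, hvw⟩ := hrepj w hw
              rw [hvw, hcc, hbb, hda]
              rw [hcc, hda] at hdw
              simp only [mul_zero, add_zero, zero_mul, zero_add] at hdw ⊢
              exact mul_div_cancel_left₀ w hdw
            · have hz0 : z = 0 := by
                have h0 : (d - a)*z = 0 := by
                  rw [hcc, hbb] at hval; linear_combination hval
                rcases mul_eq_zero.mp h0 with h | h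
                · exact absurd (sub_eq_zero.mp h) hda
                · exact h
              have hp0 : p = 0 := by
                have h0 : (d - a)*p = 0 := by
                  rw [hcc, hbb] at hQp; linear_combination hQp
                rcases mul_eq_zero.mp h0 with h | h
                · exact absurd (sub_eq_zero.mp h) hda
                · exact h
              exact hzp (hz0.trans hp0.symm)
          · have hbne : b ≠ 0 := by
              intro hb
              have h1 : (starRingEnd ℂ) c * d = 0 := by rw [← hJ1, hb, mul_zero]
              rcases mul_eq_zero.mp h1 with h | h
              · exact hcc (by simpa using congrArg (starRingEnd ℂ) h)
              · apply hRj j; rw [← hJ3, hb, h]; simp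
            have hca : (starRingEnd ℂ) a * a = ((normSq a:ℝ):ℂ) := by
              rw [mul_comm, Complex.mul_conj]
            have hcc' : (starRingEnd ℂ) c * c = ((normSq c:ℝ):ℂ) := by
              rw [mul_comm, Complex.mul_conj]
            have hcb : (starRingEnd ℂ) b * b = ((normSq b:ℝ):ℂ) := by
              rw [mul_comm, Complex.mul_conj]
            have hcd : (starRingEnd ℂ) d * d = ((normSq d:ℝ):ℂ) := by
              rw [mul_comm, Complex.mul_conj]
            have h2 : normSq a - normSq c = (1 - normSq α)^j := by
              have hh := hJ2
              rw [hRr, hca, hcc'] at hh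
              exact_mod_cast hh
            have h3 : normSq d - normSq b = (1 - normSq α)^j := by
              have hh := hJ3
              rw [hRr, hcd, hcb] at hh
              exact_mod_cast hh
            have h1n : normSq a * normSq b = normSq c * normSq d := by
              have hh := congrArg normSq hJ1
              simpa [Complex.normSq_mul, Complex.normSq_conj] using hh
            have hspos : (0:ℝ) < (1 - normSq α)^j := pow_pos hrpos j
            have hbc : normSq b = normSq c := by
              have h0 : (1-normSq α)^j * (normSq b - normSq c) = 0 := by
                linear_combination (-(normSq b))*h2 + normSq c*h3 + h1n
              rcases mul_eq_zero.mp h0 with h | h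
              · exact absurd h hspos.ne'
              · linarith [sub_eq_zero.mp h]
            have hsub : c*(z+p) = a - d := by
              have h0 : (z - p) * (c*(z+p) + d - a) = 0 := by
                linear_combination hval - hQp
              rcases mul_eq_zero.mp h0 with h | h
              · exact absurd (sub_eq_zero.mp h) hzp
              · linear_combination h
            have hbzp : b = -(c*z*p) := by
              linear_combination -hQp + p*hsub
            have hnz : normSq z < 1 := by
              rw [← Complex.sq_norm]; nlinarith [norm_nonneg z]
            have hnp : normSq p < 1 := by
              rw [← Complex.sq_norm]; nlinarith [norm_nonneg p]
            have hb2 : normSq b = normSq c * normSq z * normSq p := by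
              rw [hbzp]
              simp [Complex.normSq_mul]
            have hcpos : 0 < normSq c := normSq_pos.mpr hcc
            have hzp1 : normSq z * normSq p < 1 := by
              nlinarith [normSq_nonneg z, normSq_nonneg p]
            nlinarith [hb2, hbc, hcpos, hzp1]
        have homega : (e + p * (starRingEnd ℂ) α)/(1 - (starRingEnd ℂ) α * p) = tq / tp := by
          have hden : 1 - (starRingEnd ℂ) α * p = tp := by linear_combination ftp
          rw [hden, hsump]
        have hωk : ((e + p * (starRingEnd ℂ) α)/(1 - (starRingEnd ℂ) α * p))^k = 1 := by
          rw [homega, div_pow, tpk, tqk, div_self ha0]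
        have hωj : ∀ j, 0 < j → j < k →
            ((e + p * (starRingEnd ℂ) α)/(1 - (starRingEnd ℂ) α * p))^j ≠ 1 := by
          intro j hj1 hj2 h1
          rw [homega, div_pow, div_eq_one_iff_eq (pow_ne_zero j htp0)] at h1
          obtain ⟨a, b, c, d, hrepj, _, _, _, heigj, _⟩ := rep_exists he hα hM j
          obtain ⟨hp1, hp2⟩ := heigj p tp fep ftp
          obtain ⟨hq1, hq2⟩ := heigj q tq feq ftq
          rw [h1] at hq1 hq2
          have hc : c = 0 := by
            have h0 : c*(p - q) = 0 := by linear_combination hp2 - hq2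
            rcases mul_eq_zero.mp h0 with h | h
            · exact h
            · exact absurd (sub_eq_zero.mp h) hpq
          have haa : a = tp^j := by
            have h0 : (a - tp^j)*(p - q) = 0 := by linear_combination hp1 - hq1
            rcases mul_eq_zero.mp h0 with h | h
            · linear_combination h
            · exact absurd (sub_eq_zero.mp h) hpq
          have hbb : b = 0 := by linear_combination hp1 - p*haa
          have hdd : d = tp^j := by linear_combination hp2 - p*hc
          apply hid j hj1 hj2
          intro w hw
          obtain ⟨hdw, hvw⟩ := hrepj w hw
          rw [hvw, hc, hbb, haa, hdd]
          rw [zero_mul, zero_add, add_zero, mul_comm, mul_div_assoc,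
            div_self (pow_ne_zero j htp0), mul_one]
        exact ⟨p, hp, hMp, F2, fun m hm => dvd_of_root hk0 hωk hωj hm⟩
      rcases hone with h | h
      · exact main z₁ z₂ t₁ t₂ h hz12 fe₁ ft₁ fe₂ ft₂ tk₁ tk₂ hsum₁
      · exact main z₂ z₁ t₂ t₁ h (Ne.symm hz12) fe₂ ft₂ fe₁ ft₁ tk₂ tk₁ hsum₂
open Polynomial in
private lemma lin_ne_zero {u v : ℂ} (hu : u ≠ 0) : C u * X + C v ≠ 0 := by
  intro h
  have : (C u * X + C v).coeff 1 = u := by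
    simp [coeff_C]
  rw [h] at this
  simp at this
  exact hu this.symm

open Polynomial in
private lemma lin_rm_zero {u v z₀ : ℂ} (h : u * z₀ + v ≠ 0) :
    rootMultiplicity z₀ (C u * X + C v) = 0 := by
  apply rootMultiplicity_eq_zero
  simp [IsRoot, h]

open Polynomial in
private lemma lin_rm_one {u v z₀ : ℂ} (hu : u ≠ 0) (h : u * z₀ + v = 0) :
    rootMultiplicity z₀ (C u * X + C v) = 1 := by
  have hv : v = -(u * z₀) := by linear_combination h
  have hfac : C u * X + C v = C u * (X - C z₀) := by
    rw [hv, map_neg, map_mul]; ring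
  rw [hfac, rootMultiplicity_mul (mul_ne_zero (C_ne_zero.mpr hu) (X_sub_C_ne_zero z₀))]
  rw [rootMultiplicity_X_sub_C_self]
  rw [rootMultiplicity_eq_zero (by simp [IsRoot, hu])]

open Polynomial in
private lemma rm_prod {ι : Type*} (s : Finset ι) (f : ι → Polynomial ℂ)
    (hf : ∀ i ∈ s, f i ≠ 0) (z₀ : ℂ) :
    rootMultiplicity z₀ (∏ i ∈ s, f i) = ∑ i ∈ s, rootMultiplicity z₀ (f i) := by
  classical
  induction s using Finset.induction_on with
  | empty => simp [rootMultiplicity_eq_zero]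
  | insert i s' hni ih =>
    rw [Finset.prod_insert hni, Finset.sum_insert hni,
      rootMultiplicity_mul (mul_ne_zero (hf i (Finset.mem_insert_self i s'))
        (Finset.prod_ne_zero_iff.mpr (fun j hj => hf j (Finset.mem_insert_of_mem hj)))),
      ih (fun j hj => hf j (Finset.mem_insert_of_mem hj))]

private lemma ball_infinite : {z : ℂ | ‖z‖ < 1}.Infinite := by
  have h1 : (Set.Ioo (0:ℝ) 1).Infinite := Set.infinite_coe_iff.mp (Set.Ioo.infinite (by norm_num))
  have h2 : Set.InjOn (fun t : ℝ => ((t:ℂ)/2)) (Set.Ioo 0 1) := by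
    intro x _ y _ h
    simp only at h
    have : (x:ℂ) = y := by
      field_simp at h
      exact_mod_cast h
    exact_mod_cast this
  apply Set.Infinite.mono _ (h1.image h2)
  rintro _ ⟨t, ht, rfl⟩
  simp only [Set.mem_setOf_eq, norm_div, Complex.norm_real, Real.norm_eq_abs, Complex.norm_two]
  rw [Set.mem_Ioo] at ht
  rw [abs_of_pos ht.1]
  linarith [ht.2]
private lemma iterate_mod {M : ℂ → ℂ} {k : ℕ}
    (hMb : ∀ z, ‖z‖ < 1 → ‖M z‖ < 1)
    (hord : ∀ z, ‖z‖ < 1 → M^[k] z = z) (hk0 : 0 < k) :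
    ∀ m z, ‖z‖ < 1 → M^[m] z = M^[m % k] z := by
  have hiter : ∀ j z, ‖z‖ < 1 → ‖M^[j] z‖ < 1 := by
    intro j
    induction j with
    | zero => intro z hz; simpa using hz
    | succ j ih =>
      intro z hz
      rw [Function.iterate_succ_apply']
      exact hMb _ (ih z hz)
  have hq : ∀ q z, ‖z‖ < 1 → M^[k * q] z = z := by
    intro q
    induction q with
    | zero => intro z hz; simp
    | succ q ih =>
      intro z hz
      rw [Nat.mul_succ, Function.iterate_add_apply, hord z hz, ih z hz]
  intro m z hz
  conv_lhs => rw [← Nat.mod_add_div m k]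
  rw [Function.iterate_add_apply, hq _ z hz]

private lemma orbit_sum {M : ℂ → ℂ} {k : ℕ} (hk0 : 0 < k) (cnt : ℂ → ℕ) (p : ℂ)
    (hMb : ∀ z, ‖z‖ < 1 → ‖M z‖ < 1)
    (hord : ∀ z, ‖z‖ < 1 → M^[k] z = z)
    (hfix : ∀ j, 0 < j → j < k → ∀ z, ‖z‖ < 1 → z ≠ p → M^[j] z ≠ z)
    (hcnt : ∀ z, ‖z‖ < 1 → cnt (M z) = cnt z) :
    ∀ N (T : Finset ℂ), T.card ≤ N → (∀ w ∈ T, ‖w‖ < 1) →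
      (∀ w ∈ T, w ≠ p) → (∀ w ∈ T, M w ∈ T) →
      k ∣ ∑ w ∈ T, cnt w := by
  classical
  have hiter : ∀ j z, ‖z‖ < 1 → ‖M^[j] z‖ < 1 := by
    intro j
    induction j with
    | zero => intro z hz; simpa using hz
    | succ j ih =>
      intro z hz
      rw [Function.iterate_succ_apply']
      exact hMb _ (ih z hz)
  intro N
  induction N with
  | zero =>
    intro T hT _ _ _
    have : T = ∅ := Finset.card_eq_zero.mp (Nat.le_zero.mp hT)
    subst this; simp
  | succ N ih =>
    intro T hT hball hnp hclosed
    rcases Finset.eq_empty_or_nonempty T with rfl | ⟨z₀, hz₀⟩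
    · simp
    have hz₀b : ‖z₀‖ < 1 := hball z₀ hz₀
    have hz₀p : z₀ ≠ p := hnp z₀ hz₀
    have horbT : ∀ j, M^[j] z₀ ∈ T := by
      intro j
      induction j with
      | zero => simpa using hz₀
      | succ j ihj => rw [Function.iterate_succ_apply']; exact hclosed _ ihj
    set O : Finset ℂ := Finset.image (fun j => M^[j] z₀) (Finset.range k) with hO
    have hinj : ∀ i ∈ Finset.range k, ∀ j ∈ Finset.range k,
        M^[i] z₀ = M^[j] z₀ → i = j := by
      have key : ∀ i j, i < j → j < k → M^[i] z₀ = M^[j] z₀ → False := by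
        intro i j hij hjk heq
        have h1 : M^[(k - j) + i] z₀ = M^[(k - j) + j] z₀ := by
          rw [Function.iterate_add_apply, Function.iterate_add_apply, heq]
        have h2 : (k - j) + j = k := by omega
        rw [h2, hord z₀ hz₀b] at h1
        exact hfix ((k - j) + i) (by omega) (by omega) z₀ hz₀b hz₀p h1
      intro i hi j hj heq
      rw [Finset.mem_range] at hi hj
      rcases lt_trichotomy i j with h | h | h
      · exact absurd heq (fun he => key i j h hj he)
      · exact h
      · exact absurd heq.symm (fun he => key j i h hi he)
    have hcardO : O.card = k := by
      rw [hO, Finset.card_image_of_injOn (fun i hi j hj => hinj i hi j hj),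
        Finset.card_range]
    have hOT : O ⊆ T := by
      intro w hw
      rw [hO, Finset.mem_image] at hw
      obtain ⟨j, _, rfl⟩ := hw
      exact horbT j
    have hcntconst : ∀ j, cnt (M^[j] z₀) = cnt z₀ := by
      intro j
      induction j with
      | zero => simp
      | succ j ihj =>
        rw [Function.iterate_succ_apply', hcnt _ (hiter j z₀ hz₀b), ihj]
    have hsumO : ∑ w ∈ O, cnt w = k * cnt z₀ := by
      rw [hO, Finset.sum_image hinj]
      rw [Finset.sum_congr rfl (fun j _ => hcntconst j)]
      simp [mul_comm]
    have hTO : ∀ w ∈ T \ O, M w ∈ T \ O := by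
      intro w hw
      rw [Finset.mem_sdiff] at hw ⊢
      obtain ⟨hwT, hwO⟩ := hw
      refine ⟨hclosed w hwT, ?_⟩
      intro hMwO
      apply hwO
      rw [hO, Finset.mem_image] at hMwO
      obtain ⟨j, hj, hMw⟩ := hMwO
      have hwb : ‖w‖ < 1 := hball w hwT
      have h1 : w = M^[k - 1] (M w) := by
        have : M^[(k-1) + 1] w = w := by
          have h2 : (k - 1) + 1 = k := by omega
          rw [h2]; exact hord w hwb
        rw [Function.iterate_add_apply] at this
        simp at this
        exact this.symm
      rw [← hMw, ← Function.iterate_add_apply] at h1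
      rw [iterate_mod hMb hord hk0 _ z₀ hz₀b] at h1
      rw [hO, Finset.mem_image]
      exact ⟨_, Finset.mem_range.mpr (Nat.mod_lt _ hk0), h1.symm⟩
    have hcard' : (T \ O).card ≤ N := by
      have h1 : (T \ O).card = T.card - O.card := Finset.card_sdiff_of_subset hOT
      omega
    have hdvd1 : k ∣ ∑ w ∈ T \ O, cnt w :=
      ih (T \ O) hcard' (fun w hw => hball w (Finset.mem_sdiff.mp hw).1)
        (fun w hw => hnp w (Finset.mem_sdiff.mp hw).1) hTO
    have hsplit : ∑ w ∈ T \ O, cnt w + ∑ w ∈ O, cnt w = ∑ w ∈ T, cnt w :=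
      Finset.sum_sdiff hOT
    rw [← hsplit]
    exact Nat.dvd_add hdvd1 (by rw [hsumO]; exact Dvd.intro _ rfl)

open Polynomial in
/-- If `B` is a finite Blaschke product of degree `n`, `M ≠ id` a Möbius
transformation of the disc with `B ∘ M = B`, and `k ≥ 2` is the order of `M`,
then `k` divides `n`. -/
theorem order_dvd_degree (n : ℕ) (c : ℂ) (hc : ‖c‖ = 1)
    (a : Fin n → ℂ) (ha : ∀ i, ‖a i‖ < 1) (B : ℂ → ℂ)
    (hB : ∀ z, B z = c * ∏ i, (z - a i) / (1 - (starRingEnd ℂ) (a i) * z))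
    (e α : ℂ) (he : ‖e‖ = 1) (hα : ‖α‖ < 1) (M : ℂ → ℂ)
    (hM : ∀ z, M z = e * (z - α) / (1 - (starRingEnd ℂ) α * z))
    (hne : ∃ z ∈ Metric.ball (0 : ℂ) 1, M z ≠ z)
    (hinv : ∀ z ∈ Metric.ball (0 : ℂ) 1, B (M z) = B z)
    (k : ℕ) (hk : 2 ≤ k)
    (hord : ∀ z ∈ Metric.ball (0 : ℂ) 1, M^[k] z = z)
    (hmin : ∀ j : ℕ, 0 < j → j < k → ∃ z ∈ Metric.ball (0 : ℂ) 1, M^[j] z ≠ z) :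
    k ∣ n := by
  classical
  have hball : ∀ z : ℂ, z ∈ Metric.ball (0:ℂ) 1 ↔ ‖z‖ < 1 := by
    intro z
    rw [mem_ball_zero_iff]
  have hk0 : 0 < k := by omega
  have hne' : ∃ z, ‖z‖ < 1 ∧ M z ≠ z := by
    obtain ⟨z, hz, h⟩ := hne; exact ⟨z, (hball z).mp hz, h⟩
  have hord' : ∀ z, ‖z‖ < 1 → M^[k] z = z := fun z hz => hord z ((hball z).mpr hz)
  have hmin' : ∀ j, 0 < j → j < k → ∃ z, ‖z‖ < 1 ∧ M^[j] z ≠ z := by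
    intro j h1 h2
    obtain ⟨z, hz, h⟩ := hmin j h1 h2; exact ⟨z, (hball z).mp hz, h⟩
  have hinv' : ∀ z, ‖z‖ < 1 → B (M z) = B z := fun z hz =>
    hinv z ((hball z).mpr hz)
  have hMb : ∀ z, ‖z‖ < 1 → ‖M z‖ < 1 := fun z hz => by
    rw [hM]; exact mball he hα hz
  have hc0 : c ≠ 0 := by intro h; rw [h] at hc; simp at hc
  have hdenα : ∀ z : ℂ, ‖z‖ < 1 → (1:ℂ) - (starRingEnd ℂ) α * z ≠ 0 := by
    intro z hz
    apply one_sub_ne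
    rw [Complex.norm_conj]
    nlinarith [norm_nonneg α, norm_nonneg z]
  have hden1 : ∀ (i : Fin n) (z : ℂ), ‖z‖ < 1 →
      (1:ℂ) - (starRingEnd ℂ) (a i) * z ≠ 0 := by
    intro i z hz
    apply one_sub_ne
    rw [Complex.norm_conj]
    nlinarith [norm_nonneg (a i), norm_nonneg z, ha i]
  obtain ⟨p, hp, hMp, hfix, hdvd⟩ := keyFixed he hα hM hne' hord' hmin' hk
  -- polynomials
  set NP : Fin n → Polynomial ℂ :=
    fun i => C (e + a i * (starRingEnd ℂ) α) * X + C (-(e*α) - a i) with hNP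
  set QP : Fin n → Polynomial ℂ :=
    fun i => C (-((starRingEnd ℂ) (a i))) * X + C 1 with hQP
  set PP : Fin n → Polynomial ℂ :=
    fun i => C 1 * X + C (-(a i)) with hPP
  set DP : Fin n → Polynomial ℂ :=
    fun i => C (-((starRingEnd ℂ) α) - (starRingEnd ℂ) (a i) * e) * X
      + C (1 + (starRingEnd ℂ) (a i) * e * α) with hDP
  have hNeval : ∀ (i : Fin n) (z : ℂ), ‖z‖ < 1 →
      eval z (NP i) = (M z - a i) * (1 - (starRingEnd ℂ) α * z) := by
    intro i z hz
    rw [hNP, hM]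
    simp only [eval_add, eval_mul, eval_C, eval_X]
    field_simp [hdenα z hz]
    ring
  have hQeval : ∀ (i : Fin n) (z : ℂ), eval z (QP i) = 1 - (starRingEnd ℂ) (a i) * z := by
    intro i z; rw [hQP]; simp only [eval_add, eval_mul, eval_C, eval_X]; ring
  have hPeval : ∀ (i : Fin n) (z : ℂ), eval z (PP i) = z - a i := by
    intro i z; rw [hPP]; simp only [eval_add, eval_mul, eval_C, eval_X]; ring
  have hDeval : ∀ (i : Fin n) (z : ℂ), ‖z‖ < 1 →
      eval z (DP i) = (1 - (starRingEnd ℂ) (a i) * M z) * (1 - (starRingEnd ℂ) α * z) := by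
    intro i z hz
    rw [hDP, hM]
    simp only [eval_add, eval_mul, eval_C, eval_X]
    field_simp [hdenα z hz]
    ring
  have hLR : (∏ i, NP i) * ∏ i, QP i = (∏ i, PP i) * ∏ i, DP i := by
    apply Polynomial.eq_of_infinite_eval_eq
    apply Set.Infinite.mono _ ball_infinite
    intro z hz
    simp only [Set.mem_setOf_eq] at hz ⊢
    have hEq : c * ∏ i, (M z - a i) / (1 - (starRingEnd ℂ) (a i) * M z)
        = c * ∏ i, (z - a i) / (1 - (starRingEnd ℂ) (a i) * z) := by
      rw [← hB, ← hB]; exact hinv' z hz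
    have hEq2 := mul_left_cancel₀ hc0 hEq
    rw [Finset.prod_div_distrib, Finset.prod_div_distrib] at hEq2
    have hQ1 : (∏ i, ((1:ℂ) - (starRingEnd ℂ) (a i) * M z)) ≠ 0 :=
      Finset.prod_ne_zero_iff.mpr (fun i _ => hden1 i (M z) (hMb z hz))
    have hQ2 : (∏ i, ((1:ℂ) - (starRingEnd ℂ) (a i) * z)) ≠ 0 :=
      Finset.prod_ne_zero_iff.mpr (fun i _ => hden1 i z hz)
    rw [div_eq_div_iff hQ1 hQ2] at hEq2
    rw [eval_mul, eval_mul, eval_prod, eval_prod, eval_prod, eval_prod]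
    rw [Finset.prod_congr rfl (fun i _ => hNeval i z hz),
      Finset.prod_congr rfl (fun i _ => hQeval i z),
      Finset.prod_congr rfl (fun i _ => hPeval i z),
      Finset.prod_congr rfl (fun i _ => hDeval i z hz)]
    rw [Finset.prod_mul_distrib, Finset.prod_mul_distrib, Finset.prod_const,
      Finset.card_univ, Fintype.card_fin]
    linear_combination ((1 - (starRingEnd ℂ) α * z)^n) * hEq2
    -- counting function
  set cnt : ℂ → ℕ := fun w => (Finset.univ.filter (fun i => a i = w)).card with hcnt
  have hNu : ∀ i : Fin n, e + a i * (starRingEnd ℂ) α ≠ 0 := by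
    intro i h
    have h1 : e = -(a i * (starRingEnd ℂ) α) := by linear_combination h
    have := congrArg (‖·‖) h1
    rw [he, norm_neg, norm_mul, Complex.norm_conj] at this
    nlinarith [ha i, norm_nonneg (a i), norm_nonneg α]
  have hNne : ∀ i, NP i ≠ 0 := fun i => lin_ne_zero (hNu i)
  have hQne : ∀ i, QP i ≠ 0 := by
    intro i h
    have : eval 0 (QP i) = 0 := by rw [h]; simp
    rw [hQeval] at this
    simp at this
  have hPne : ∀ i, PP i ≠ 0 := fun i => lin_ne_zero one_ne_zero
  have hDne : ∀ i, DP i ≠ 0 := by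
    intro i h
    have h0 : eval 0 (DP i) = 0 := by rw [h]; simp
    rw [hDeval i 0 (by simp)] at h0
    rcases mul_eq_zero.mp h0 with h' | h'
    · exact hden1 i (M 0) (hMb 0 (by simp)) h'
    · exact hdenα 0 (by simp) h'
  have hrmN : ∀ (z : ℂ), ‖z‖ < 1 → ∀ i : Fin n,
      rootMultiplicity z (NP i) = if a i = M z then 1 else 0 := by
    intro z hz i
    have hev : eval z (NP i) = (M z - a i) * (1 - (starRingEnd ℂ) α * z) := hNeval i z hz
    have hevlin : eval z (NP i) = (e + a i * (starRingEnd ℂ) α) * z + (-(e*α) - a i) := by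
      rw [hNP]; simp only [eval_add, eval_mul, eval_C, eval_X]
    by_cases hcase : a i = M z
    · rw [if_pos hcase]
      apply lin_rm_one (hNu i)
      rw [← hevlin, hev, hcase]
      ring
    · rw [if_neg hcase]
      apply lin_rm_zero
      rw [← hevlin, hev]
      exact mul_ne_zero (sub_ne_zero.mpr (fun h => hcase h.symm)) (hdenα z hz)
  have hrmP : ∀ (z : ℂ) (i : Fin n),
      rootMultiplicity z (PP i) = if a i = z then 1 else 0 := by
    intro z i
    have hevlin : eval z (PP i) = 1 * z + (-(a i)) := by
      rw [hPP]; simp only [eval_add, eval_mul, eval_C, eval_X]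
    by_cases hcase : a i = z
    · rw [if_pos hcase]
      apply lin_rm_one one_ne_zero
      rw [← hevlin, hPeval, hcase]; ring
    · rw [if_neg hcase]
      apply lin_rm_zero
      rw [← hevlin, hPeval]
      exact sub_ne_zero.mpr (fun h => hcase h.symm)
  have hcnteq : ∀ z, ‖z‖ < 1 → cnt (M z) = cnt z := by
    intro z hz
    have hL : rootMultiplicity z ((∏ i, NP i) * ∏ i, QP i) = cnt (M z) := by
      rw [rootMultiplicity_mul (mul_ne_zero
        (Finset.prod_ne_zero_iff.mpr (fun i _ => hNne i))
        (Finset.prod_ne_zero_iff.mpr (fun i _ => hQne i)))]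
      rw [rm_prod _ _ (fun i _ => hNne i), rm_prod _ _ (fun i _ => hQne i)]
      have h1 : ∑ i, rootMultiplicity z (QP i) = 0 := by
        apply Finset.sum_eq_zero
        intro i _
        apply rootMultiplicity_eq_zero
        intro hroot
        exact hden1 i z hz (by rw [← hQeval i z]; exact hroot)
      rw [h1, add_zero]
      rw [Finset.sum_congr rfl (fun i _ => hrmN z hz i)]
      rw [hcnt, ← Finset.card_filter]
    have hR : rootMultiplicity z ((∏ i, PP i) * ∏ i, DP i) = cnt z := by
      rw [rootMultiplicity_mul (mul_ne_zero
        (Finset.prod_ne_zero_iff.mpr (fun i _ => hPne i))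
        (Finset.prod_ne_zero_iff.mpr (fun i _ => hDne i)))]
      rw [rm_prod _ _ (fun i _ => hPne i), rm_prod _ _ (fun i _ => hDne i)]
      have h1 : ∑ i, rootMultiplicity z (DP i) = 0 := by
        apply Finset.sum_eq_zero
        intro i _
        apply rootMultiplicity_eq_zero
        intro hroot
        rw [Polynomial.IsRoot, hDeval i z hz] at hroot
        rcases mul_eq_zero.mp hroot with h' | h'
        · exact hden1 i (M z) (hMb z hz) h'
        · exact hdenα z hz h'
      rw [h1, add_zero]
      rw [Finset.sum_congr rfl (fun i _ => hrmP z i)]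
      rw [hcnt, ← Finset.card_filter]
    rw [← hL, ← hR, hLR]
    -- k divides cnt p
  have htp0 : (1:ℂ) - (starRingEnd ℂ) α * p ≠ 0 := hdenα p hp
  have hFp : (e + p * (starRingEnd ℂ) α) * p + (-(e*α) - p) = 0 := by
    have h1 := hM p
    rw [hMp, eq_div_iff htp0] at h1
    linear_combination -h1
  have hkcnt : k ∣ cnt p := by
    have hmm' : cnt p + (Finset.univ.filter (fun i : Fin n => ¬ a i = p)).card = n := by
      rw [hcnt]
      simp only
      rw [Finset.card_filter_add_card_filter_not, Finset.card_univ,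
        Fintype.card_fin]
    set m : ℕ := cnt p with hmdef
    set m' : ℕ := (Finset.univ.filter (fun i : Fin n => ¬ a i = p)).card with hm'def
    have hNsplit : (∏ i, NP i)
        = (C (e + p * (starRingEnd ℂ) α) * X + C (-(e*α) - p))^m
          * ∏ i ∈ Finset.univ.filter (fun i : Fin n => ¬ a i = p), NP i := by
      rw [← Finset.prod_filter_mul_prod_filter_not Finset.univ (fun i => a i = p)]
      congr 1
      have hcongr : ∀ i ∈ Finset.univ.filter (fun i : Fin n => a i = p),
          NP i = C (e + p * (starRingEnd ℂ) α) * X + C (-(e*α) - p) := by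
        intro i hi
        rw [Finset.mem_filter] at hi
        rw [hNP]
        simp only
        rw [hi.2]
      rw [Finset.prod_congr rfl hcongr, Finset.prod_const]
    have hPsplit : (∏ i, PP i) = (X - C p)^m
        * ∏ i ∈ Finset.univ.filter (fun i : Fin n => ¬ a i = p), PP i := by
      rw [← Finset.prod_filter_mul_prod_filter_not Finset.univ (fun i => a i = p)]
      congr 1
      have hcongr : ∀ i ∈ Finset.univ.filter (fun i : Fin n => a i = p),
          PP i = X - C p := by
        intro i hi
        rw [Finset.mem_filter] at hi
        rw [hPP]
        simp only
        rw [hi.2, map_neg, map_one, one_mul]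
        ring
      rw [Finset.prod_congr rfl hcongr, Finset.prod_const]
    have hufac : C (e + p * (starRingEnd ℂ) α) * X + C (-(e*α) - p)
        = C (e + p * (starRingEnd ℂ) α) * (X - C p) := by
      have hv : (-(e*α) - p) = -((e + p * (starRingEnd ℂ) α) * p) := by
        linear_combination hFp
      rw [hv, map_neg, map_mul]
      ring
    rw [hNsplit, hPsplit, hufac, mul_pow] at hLR
    have hcancel : (C (e + p * (starRingEnd ℂ) α))^m
        * ((∏ i ∈ Finset.univ.filter (fun i : Fin n => ¬ a i = p), NP i) * ∏ i, QP i)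
        = (∏ i ∈ Finset.univ.filter (fun i : Fin n => ¬ a i = p), PP i) * ∏ i, DP i := by
      have hXp : ((X : Polynomial ℂ) - C p)^m ≠ 0 := pow_ne_zero _ (X_sub_C_ne_zero p)
      apply mul_left_cancel₀ hXp
      linear_combination hLR
    have hEv := congrArg (eval p) hcancel
    rw [eval_mul, eval_mul, eval_mul, eval_pow, eval_C, eval_prod, eval_prod,
      eval_prod, eval_prod] at hEv
    rw [Finset.prod_congr rfl (fun i _ => hNeval i p hp),
      Finset.prod_congr rfl (fun i _ => hQeval i p),
      Finset.prod_congr rfl (fun i _ => hPeval i p),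
      Finset.prod_congr rfl (fun i _ => hDeval i p hp)] at hEv
    rw [hMp] at hEv
    rw [Finset.prod_mul_distrib, Finset.prod_mul_distrib, Finset.prod_const,
      Finset.prod_const, Finset.card_univ, Fintype.card_fin, ← hm'def] at hEv
    have hprodP : (∏ i ∈ Finset.univ.filter (fun i : Fin n => ¬ a i = p), (p - a i)) ≠ 0 := by
      apply Finset.prod_ne_zero_iff.mpr
      intro i hi
      rw [Finset.mem_filter] at hi
      exact sub_ne_zero.mpr (fun h => hi.2 h.symm)
    have hprodQ : (∏ i, ((1:ℂ) - (starRingEnd ℂ) (a i) * p)) ≠ 0 :=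
      Finset.prod_ne_zero_iff.mpr (fun i _ => hden1 i p hp)
    have hkey : (e + p * (starRingEnd ℂ) α)^m * ((1 - (starRingEnd ℂ) α * p))^m'
        = ((1 - (starRingEnd ℂ) α * p))^n := by
      have h2 : ((e + p * (starRingEnd ℂ) α)^m * ((1 - (starRingEnd ℂ) α * p))^m'
          - ((1 - (starRingEnd ℂ) α * p))^n)
          * ((∏ i ∈ Finset.univ.filter (fun i : Fin n => ¬ a i = p), (p - a i))
            * (∏ i, ((1:ℂ) - (starRingEnd ℂ) (a i) * p))) = 0 := by
        linear_combination hEv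
      rcases mul_eq_zero.mp h2 with h | h
      · linear_combination h
      · exact absurd h (mul_ne_zero hprodP hprodQ)
    have hfin : ((e + p * (starRingEnd ℂ) α) / (1 - (starRingEnd ℂ) α * p))^m = 1 := by
      rw [div_pow, div_eq_one_iff_eq (pow_ne_zero m htp0)]
      have h3 : ((1:ℂ) - (starRingEnd ℂ) α * p)^n
          = ((1 - (starRingEnd ℂ) α * p))^m * ((1 - (starRingEnd ℂ) α * p))^m' := by
        rw [← pow_add, hmm']
      rw [h3] at hkey
      exact mul_right_cancel₀ (pow_ne_zero m' htp0) (by linear_combination hkey)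
    exact hdvd m hfin
  -- final counting
  have hpfix : ∀ j : ℕ, M^[j] p = p := by
    intro j
    induction j with
    | zero => simp
    | succ j ih => rw [Function.iterate_succ_apply', ih, hMp]
  have hMinj : ∀ w, ‖w‖ < 1 → M w = p → w = p := by
    intro w hw hMw
    have h1 : M^[(k-1)+1] w = w := by
      rw [show (k-1)+1 = k by omega]; exact hord' w hw
    rw [Function.iterate_succ_apply, hMw, hpfix] at h1
    exact h1.symm
  set T := Finset.univ.image a with hT
  have hn : n = ∑ w ∈ T, cnt w := by
    have h0 := Finset.card_eq_sum_card_fiberwise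
      (f := a) (s := Finset.univ) (t := T)
      (fun x _ => Finset.mem_image_of_mem a (Finset.mem_univ x))
    rw [Finset.card_univ, Fintype.card_fin] at h0
    exact h0
  have hTball : ∀ w ∈ T, ‖w‖ < 1 := by
    intro w hw
    rw [hT, Finset.mem_image] at hw
    obtain ⟨i, _, rfl⟩ := hw
    exact ha i
  have hcnt_pos : ∀ w ∈ T, cnt w ≠ 0 := by
    intro w hw
    rw [hT, Finset.mem_image] at hw
    obtain ⟨i, _, rfl⟩ := hw
    rw [hcnt]
    simp only
    apply Finset.card_ne_zero_of_mem (a := i)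
    rw [Finset.mem_filter]
    exact ⟨Finset.mem_univ i, rfl⟩
  have hTmem : ∀ w, cnt w ≠ 0 → w ∈ T := by
    intro w h0
    obtain ⟨i, hi⟩ := Finset.card_ne_zero.mp h0
    rw [Finset.mem_filter] at hi
    rw [hT, Finset.mem_image]
    exact ⟨i, Finset.mem_univ i, hi.2⟩
  have hclosed' : ∀ w ∈ T, w ≠ p → M w ∈ T ∧ M w ≠ p := by
    intro w hw hwp
    have hwb := hTball w hw
    constructor
    · apply hTmem (M w)
      rw [hcnteq w hwb]
      exact hcnt_pos w hw
    · intro hMwp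
      exact hwp (hMinj w hwb hMwp)
  by_cases hpT : p ∈ T
  · have hsplit := Finset.sum_erase_add T cnt hpT
    have hdvd1 : k ∣ ∑ w ∈ T.erase p, cnt w := by
      apply orbit_sum hk0 cnt p hMb hord' hfix hcnteq (T.erase p).card (T.erase p) le_rfl
      · intro w hw; exact hTball w (Finset.mem_of_mem_erase hw)
      · intro w hw; exact (Finset.mem_erase.mp hw).1
      · intro w hw
        rw [Finset.mem_erase] at hw
        obtain ⟨h1, h2⟩ := hclosed' w hw.2 hw.1
        exact Finset.mem_erase.mpr ⟨h2, h1⟩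
    rw [hn, ← hsplit]
    exact Nat.dvd_add hdvd1 hkcnt
  · have hnp2 : ∀ w ∈ T, w ≠ p := fun w hw h => hpT (h ▸ hw)
    rw [hn]
    apply orbit_sum hk0 cnt p hMb hord' hfix hcnteq T.card T le_rfl hTball hnp2
    intro w hw
    exact (hclosed' w hw (hnp2 w hw)).1
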